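/- If a closed subset A of a space X is homologically UV^n(ℤ), where ℤ is the group of integers, then A is homologically UV^n(G) for every coefficient group G. -/

import Mathlib

noncomputable section
open Set
universe u v w w'

/-- The topological simplex associated to `x : SimplexCategory` (as in the older Mathlib). -/
def SimplexCategory.toTopObj (x : SimplexCategory) : Set (Fin (x.len + 1) → NNReal) :=
  {f | ∑ i, f i = 1}

/-- A morphism in `SimplexCategory` induces a map on the associated topological spaces
(as in the older Mathlib). -/
def SimplexCategory.toTopMap {x y : SimplexCategory} (f : x ⟶ y) (g : x.toTopObj) :
    y.toTopObj :=
  ⟨fun i => ∑ j ∈ Finset.univ.filter (fun j => f.toOrderHom j = i), g.1 j, by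
    show ∑ i, ∑ j ∈ Finset.univ.filter (fun j => f.toOrderHom j = i), g.1 j = 1
    rw [Finset.sum_fiberwise]
    exact g.2⟩

theorem SimplexCategory.continuous_toTopMap {x y : SimplexCategory} (f : x ⟶ y) :
    Continuous (SimplexCategory.toTopMap f) := by
  refine Continuous.subtype_mk (continuous_pi fun i => ?_) _
  exact continuous_finset_sum _ (fun j _ => (continuous_apply _).comp continuous_subtype_val)

/-- The topological standard `k`-simplex. -/
abbrev TDelta (k : ℕ) := (SimplexCategory.mk k).toTopObj

/-- A singular `k`-simplex in `X`. -/
abbrev SSimplex (X : Type u) [TopologicalSpace X] (k : ℕ) := C(TDelta k, X)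

/-- Singular `k`-chains of `X` with coefficients in `G`. -/
abbrev SChain (X : Type u) [TopologicalSpace X] (G : Type v) [Zero G] (k : ℕ) :=
  SSimplex X k →₀ G

variable {X : Type u} [TopologicalSpace X]

/-- The `i`-th face of a singular `(k+1)`-simplex. -/
def SSimplex.face {k : ℕ} (σ : SSimplex X (k + 1)) (i : Fin (k + 2)) : SSimplex X k :=
  σ.comp ⟨SimplexCategory.toTopMap (SimplexCategory.δ i),
    SimplexCategory.continuous_toTopMap _⟩

/-- `τ` is a face of `σ` (a restriction of `σ` to a face of the standard simplex). -/
def IsFaceOf {m k : ℕ} (τ : SSimplex X m) (σ : SSimplex X k) : Prop :=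
  ∃ f : SimplexCategory.mk m ⟶ SimplexCategory.mk k,
    Function.Injective f.toOrderHom ∧
    τ = σ.comp ⟨SimplexCategory.toTopMap f, SimplexCategory.continuous_toTopMap f⟩

theorem isFaceOf_face {k : ℕ} (σ : SSimplex X (k + 1)) (i : Fin (k + 2)) :
    IsFaceOf (σ.face i) σ :=
  ⟨SimplexCategory.δ i, Fin.succAbove_right_injective, rfl⟩

theorem IsFaceOf.dim_le {m k : ℕ} {τ : SSimplex X m} {σ : SSimplex X k}
    (h : IsFaceOf τ σ) : m ≤ k := by
  obtain ⟨f, hf, -⟩ := h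
  have := Fintype.card_le_of_injective _ hf
  simpa using this

theorem IsFaceOf.range_subset {m k : ℕ} {τ : SSimplex X m} {σ : SSimplex X k}
    (h : IsFaceOf τ σ) : Set.range τ ⊆ Set.range σ := by
  obtain ⟨f, -, rfl⟩ := h
  rintro x ⟨y, rfl⟩
  exact ⟨_, rfl⟩

/-- The boundary operator on singular chains. -/
def SBoundary (X : Type u) [TopologicalSpace X] (G : Type v) [AddCommGroup G] (k : ℕ) :
    SChain X G (k + 1) →+ SChain X G k :=
  Finsupp.liftAddHom fun σ =>
    ∑ i : Fin (k + 2), ((-1 : ℤ) ^ (i : ℕ)) • Finsupp.singleAddHom (σ.face i)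

/-- The augmentation on singular `0`-chains. -/
def SAug (X : Type u) [TopologicalSpace X] (G : Type v) [AddCommGroup G] :
    SChain X G 0 →+ G :=
  Finsupp.liftAddHom fun _ => AddMonoidHom.id G

/-- The carrier `|c|` of a singular chain: the union of the images of the singular
simplexes appearing in its irreducible representation. -/
def SCarrier {G : Type v} [Zero G] {k : ℕ} (c : SChain X G k) : Set X :=
  ⋃ σ ∈ c.support, Set.range σ

/-- A cycle of the singular chain complex, reduced in dimension `0`. -/
def IsCycle (X : Type u) [TopologicalSpace X] (G : Type v) [AddCommGroup G] :
    ∀ {k : ℕ}, SChain X G k → Prop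
  | 0, c => SAug X G c = 0
  | (k + 1), c => SBoundary X G k c = 0

/-- The vertices of a singular chain: all `0`-dimensional faces of the simplexes in its
irreducible representation. -/
def chainVertices {G : Type v} [Zero G] {k : ℕ} (c : SChain X G k) : Set (SSimplex X 0) :=
  {v | ∃ σ ∈ c.support, IsFaceOf v σ}

/-- The point `z` viewed as a singular `0`-simplex. -/
def ptSimplex {Z : Type w} [TopologicalSpace Z] (z : Z) : SSimplex Z 0 :=
  ContinuousMap.const _ z

/-- Every `k`-cycle (`k ≤ n`, reduced in dimension `0`) of `S(V;G)` bounds in `S(U;G)`;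
this expresses that the inclusion `V ↪ U` induces trivial homomorphisms
`H_k(V;G) → H_k(U;G)` for all `k ≤ n` (homology reduced in dimension `0`). -/
def HomTrivialPair (G : Type v) [AddCommGroup G] {X : Type u} [TopologicalSpace X]
    (V U : Set X) (n : ℕ) : Prop :=
  ∀ k ≤ n, ∀ c : SChain X G k, SCarrier c ⊆ V → IsCycle X G c →
    ∃ b : SChain X G (k + 1), SCarrier b ⊆ U ∧ SBoundary X G k b = c

/-- `A` is a homologically `UV^n(G)` subset of `X`. -/
def IsUVSet (G : Type v) [AddCommGroup G] {X : Type u} [TopologicalSpace X]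
    (n : ℕ) (A : Set X) : Prop :=
  ∀ U ∈ nhdsSet A, ∃ V ∈ nhdsSet A, V ⊆ U ∧ HomTrivialPair G V U n

/-- `f` is a closed homologically `UV^n(G)` surjection. -/
def IsUVMap (G : Type v) [AddCommGroup G] {X : Type u} {Y : Type w}
    [TopologicalSpace X] [TopologicalSpace Y] (n : ℕ) (f : X → Y) : Prop :=
  Continuous f ∧ IsClosedMap f ∧ Function.Surjective f ∧
    ∀ y : Y, IsUVSet G n (f ⁻¹' {y})

/-- `X` is homologically locally connected in dimension `n` with respect to `G`
(`X` is `lc^n_G`). -/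
def IsLC (G : Type v) [AddCommGroup G] (X : Type u) [TopologicalSpace X] (n : ℕ) : Prop :=
  ∀ x : X, ∀ U ∈ nhds x, ∃ V ∈ nhds x, V ⊆ U ∧ HomTrivialPair G V U n

/-- An open cover of (all of) `X`. -/
def IsOpenCover {X : Type u} [TopologicalSpace X] (𝒰 : Set (Set X)) : Prop :=
  (∀ U ∈ 𝒰, IsOpen U) ∧ ⋃₀ 𝒰 = Set.univ

/-- An open cover of the subset `W` of `X`. -/
def IsOpenCoverOn {X : Type u} [TopologicalSpace X] (𝒰 : Set (Set X)) (W : Set X) : Prop :=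
  (∀ U ∈ 𝒰, IsOpen U) ∧ ⋃₀ 𝒰 = W

/-- `𝒱` refines `𝒰`. -/
def Refines {X : Type u} (𝒱 𝒰 : Set (Set X)) : Prop := ∀ V ∈ 𝒱, ∃ U ∈ 𝒰, V ⊆ U

/-- The cover `f⁻¹(𝒰)`. -/
def preCover {X : Type u} {Y : Type w} (f : X → Y) (𝒰 : Set (Set Y)) : Set (Set X) :=
  (fun U => f ⁻¹' U) '' 𝒰

/-- Covering dimension of `X` is at most `n`: every open cover admits an open refinement
covering `X` in which no `n + 2` distinct members have a common point. -/
def CovDimLE (X : Type u) [TopologicalSpace X] (n : ℕ) : Prop :=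
  ∀ 𝒰 : Set (Set X), IsOpenCover 𝒰 → ∃ 𝒱 : Set (Set X), IsOpenCover 𝒱 ∧ Refines 𝒱 𝒰 ∧
    ∀ S : Finset (Set X), ↑S ⊆ 𝒱 → (⋂₀ (S : Set (Set X))).Nonempty → S.card ≤ n + 1
/-- A subcomplex of the singular chain complex of `Z`: a face-closed family of
singular simplexes. -/
structure SingSub (Z : Type w) [TopologicalSpace Z] where
  mem : ∀ k, Set (SSimplex Z k)
  face_mem : ∀ {m k : ℕ} {τ : SSimplex Z m} {σ : SSimplex Z k},
    IsFaceOf τ σ → σ ∈ mem k → τ ∈ mem m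

variable {Z : Type w} [TopologicalSpace Z]

/-- The full singular chain complex `S(Z;G)` viewed as a subcomplex of itself. -/
def fullSub (Z : Type w) [TopologicalSpace Z] : SingSub Z :=
  ⟨fun _ => Set.univ, fun _ _ => trivial⟩

/-- The subcomplex `S(A;G)` of simplexes with carrier inside `A`. -/
def setSub (A : Set Z) : SingSub Z :=
  ⟨fun _ => {σ | Set.range σ ⊆ A}, fun h hσ => (h.range_subset).trans hσ⟩

/-- The subcomplex `S(W,ω;G)` generated by simplexes whose carrier lies in some member
of `ω`. -/
def coverSub (ω : Set (Set Z)) : SingSub Z :=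
  ⟨fun _ => {σ | ∃ O ∈ ω, Set.range σ ⊆ O},
    fun h hσ => by obtain ⟨O, hO, hsub⟩ := hσ; exact ⟨O, hO, h.range_subset.trans hsub⟩⟩

/-- The `n`-dimensional part `S^{(n)}` of a subcomplex. -/
def truncSub (T : SingSub Z) (n : ℕ) : SingSub Z :=
  ⟨fun k => {σ | σ ∈ T.mem k ∧ k ≤ n},
    fun h hσ => ⟨T.face_mem h hσ.1, le_trans h.dim_le hσ.2⟩⟩

/-- Intersection of two subcomplexes. -/
def interSub (T T' : SingSub Z) : SingSub Z :=
  ⟨fun k => T.mem k ∩ T'.mem k,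
    fun h hσ => ⟨T.face_mem h hσ.1, T'.face_mem h hσ.2⟩⟩

/-- `T ≤ T'` for subcomplexes. -/
def SingSub.le (T T' : SingSub Z) : Prop := ∀ k, T.mem k ⊆ T'.mem k

/-- The `G`-module of `k`-chains of the subcomplex `T`, as a submodule of `S_k(Z;G)`. -/
def SingSub.sub (T : SingSub Z) (G : Type v) [CommRing G] (k : ℕ) :
    Submodule G (SChain Z G k) where
  carrier := {c | ∀ σ ∈ c.support, σ ∈ T.mem k}
  add_mem' := by
    classical
    intro a b ha hb σ hσ
    rcases Finset.mem_union.1 (Finsupp.support_add hσ) with h | h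
    exacts [ha σ h, hb σ h]
  zero_mem' := by simp
  smul_mem' := by
    intro g c hc σ hσ
    exact hc σ (Finsupp.support_smul hσ)

theorem SingSub.mem_sub {T : SingSub Z} {G : Type v} [CommRing G] {k : ℕ}
    {c : SChain Z G k} : c ∈ T.sub G k ↔ ∀ σ ∈ c.support, σ ∈ T.mem k := Iff.rfl

theorem SingSub.sub_le {T T' : SingSub Z} (h : T.le T') (G : Type v) [CommRing G] (k : ℕ) :
    T.sub G k ≤ T'.sub G k := fun _c hc => fun σ hσ => h k (hc σ hσ)

theorem SingSub.mem_full {G : Type v} [CommRing G] {k : ℕ} (c : SChain Z G k) :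
    c ∈ (fullSub Z).sub G k := fun _ _ => trivial

theorem SingSub.single_mem (T : SingSub Z) {G : Type v} [CommRing G] {k : ℕ}
    {σ : SSimplex Z k} (h : σ ∈ T.mem k) (g : G) : Finsupp.single σ g ∈ T.sub G k := by
  rw [SingSub.mem_sub]
  intro τ hτ
  have h1 : τ ∈ ({σ} : Finset (SSimplex Z k)) := Finsupp.support_single_subset hτ
  rw [Finset.mem_singleton] at h1
  subst h1; exact h

/-- The generator of `T.sub G k` given by a single simplex with coefficient `1`. -/
def SingSub.gen (T : SingSub Z) (G : Type v) [CommRing G] {k : ℕ}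
    (σ : SSimplex Z k) (h : σ ∈ T.mem k) : T.sub G k :=
  ⟨Finsupp.single σ 1, T.single_mem h 1⟩


theorem SingSub.boundary_mem (T : SingSub Z) {G : Type v} [CommRing G] {k : ℕ}
    {c : SChain Z G (k + 1)} (hc : c ∈ T.sub G (k + 1)) :
    SBoundary Z G k c ∈ T.sub G k := by
  classical
  rw [SingSub.mem_sub] at hc ⊢
  intro τ hτ
  rw [SBoundary, Finsupp.liftAddHom_apply] at hτ
  have h1 := Finsupp.support_sum hτ
  rw [Finset.mem_biUnion] at h1
  obtain ⟨σ, hσ, hτ2⟩ := h1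
  rw [AddMonoidHom.finset_sum_apply] at hτ2
  have h2 := Finsupp.support_finset_sum (s := (Finset.univ : Finset (Fin (k + 2))))
    (f := fun i : Fin (k + 2) =>
      ((((-1 : ℤ) ^ (i : ℕ)) • Finsupp.singleAddHom (σ.face i)) (c σ))) hτ2
  rw [Finset.mem_biUnion] at h2
  obtain ⟨i, -, hi⟩ := h2
  simp only [AddMonoidHom.smul_apply] at hi
  have h5 := Finsupp.support_smul hi
  have h4 : τ ∈ ({σ.face i} : Finset (SSimplex Z k)) := Finsupp.support_single_subset h5
  rw [Finset.mem_singleton] at h4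
  subst h4
  exact T.face_mem (isFaceOf_face σ i) (hc σ hσ)

section ChainMaps

variable {G : Type v} [CommRing G]

/-- A chain morphism from the subcomplex `T` of `S(Z;G)` to `S(X;G)`: a family of
`G`-homomorphisms commuting with the boundary operators and the augmentations. -/
structure SingChainMap (G : Type v) [CommRing G] {Z : Type w} [TopologicalSpace Z]
    (T : SingSub Z) (X : Type u) [TopologicalSpace X] where
  map : ∀ k, T.sub G k →ₗ[G] SChain X G k
  comm : ∀ (k : ℕ) (c : T.sub G (k + 1)),
    map k ⟨SBoundary Z G k c, T.boundary_mem c.2⟩ = SBoundary X G k (map (k + 1) c)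
  aug : ∀ c : T.sub G 0, SAug X G (map 0 c) = SAug Z G c

variable {Z : Type w} [TopologicalSpace Z] {T : SingSub Z} {X : Type u} [TopologicalSpace X]

/-- The value of a chain morphism on a single simplex of the subcomplex. -/
def SingChainMap.val (φ : SingChainMap G T X) (m : ℕ) (σ : SSimplex Z m)
    (h : σ ∈ T.mem m) : SChain X G m :=
  φ.map m (T.gen G σ h)

/-- Restriction of a chain morphism to a smaller subcomplex. -/
def SingChainMap.restrict (φ : SingChainMap G T X) {T' : SingSub Z} (h : T'.le T) :
    SingChainMap G T' X where
  map k := (φ.map k).comp (Submodule.inclusion (SingSub.sub_le h G k))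
  comm k c := φ.comm k (Submodule.inclusion (SingSub.sub_le h G (k + 1)) c)
  aug c := φ.aug (Submodule.inclusion (SingSub.sub_le h G 0) c)

/-- `φ'` (defined on the larger subcomplex) extends `φ`. -/
def SingChainMap.ExtendsMap {T' : SingSub Z} (h : T'.le T)
    (φbig : SingChainMap G T X) (φ : SingChainMap G T' X) : Prop :=
  ∀ (k : ℕ) (c : SChain Z G k) (hc : c ∈ T'.sub G k),
    φbig.map k ⟨c, SingSub.sub_le h G k hc⟩ = φ.map k ⟨c, hc⟩

end ChainMaps

section ValPredicates

variable {G : Type v} [Zero G] {Z : Type w} [TopologicalSpace Z]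
  {X : Type u} [TopologicalSpace X]

/-- Two families of values on the simplexes of `T` are `𝒰`-close. -/
def ValsClose (T : SingSub Z)
    (F₁ F₂ : ∀ (m : ℕ) (σ : SSimplex Z m), σ ∈ T.mem m → SChain X G m)
    (𝒰 : Set (Set X)) : Prop :=
  ∀ (k : ℕ) (σ : SSimplex Z k), σ ∈ T.mem k → ∃ U ∈ 𝒰,
    ∀ (m : ℕ) (τ : SSimplex Z m), IsFaceOf τ σ → ∀ hτ : τ ∈ T.mem m,
      SCarrier (F₁ m τ hτ) ∪ SCarrier (F₂ m τ hτ) ⊆ U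

/-- A family of values on the simplexes of `T` is `𝒰`-small. -/
def ValsSmall (T : SingSub Z)
    (F : ∀ (m : ℕ) (σ : SSimplex Z m), σ ∈ T.mem m → SChain X G m)
    (𝒰 : Set (Set X)) : Prop :=
  ∀ (k : ℕ) (σ : SSimplex Z k), σ ∈ T.mem k → ∃ U ∈ 𝒰,
    ∀ (m : ℕ) (τ : SSimplex Z m), IsFaceOf τ σ → ∀ hτ : τ ∈ T.mem m,
      SCarrier (F m τ hτ) ⊆ U

/-- A family of values on the simplexes of `T` is correct: each singular `0`-simplex is
sent to a singular `0`-simplex. -/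
def ValsCorrect [One G] (T : SingSub Z)
    (F : ∀ (m : ℕ) (σ : SSimplex Z m), σ ∈ T.mem m → SChain X G m) : Prop :=
  ∀ (σ : SSimplex Z 0) (hσ : σ ∈ T.mem 0), ∃ τ : SSimplex X 0,
    F 0 σ hσ = Finsupp.single τ 1

end ValPredicates

section MoreChainMaps

variable {G : Type v} [CommRing G] {Z : Type w} [TopologicalSpace Z] {T : SingSub Z}
  {X : Type u} [TopologicalSpace X]

/-- A chain morphism is continuous. -/
def SingChainMap.IsCont (φ : SingChainMap G T X) : Prop :=
  ∀ (z : Z) (hz : ptSimplex z ∈ T.mem 0) (U : Set X), IsOpen U →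
    SCarrier (φ.val 0 (ptSimplex z) hz) ⊆ U →
    ∃ V ∈ nhds z, ∀ z' ∈ V, ∀ hz' : ptSimplex z' ∈ T.mem 0,
      SCarrier (φ.val 0 (ptSimplex z') hz') ⊆ U

/-- A chain homotopy `D` between two chain morphisms `φ` and `ψ`. -/
structure SingChainHtpy {G : Type v} [CommRing G] {Z : Type w} [TopologicalSpace Z]
    {T : SingSub Z} {X : Type u} [TopologicalSpace X] (φ ψ : SingChainMap G T X) where
  map : ∀ k, T.sub G k →ₗ[G] SChain X G (k + 1)
  zero : ∀ c : T.sub G 0, SBoundary X G 0 (map 0 c) = φ.map 0 c - ψ.map 0 c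
  succ : ∀ (k : ℕ) (c : T.sub G (k + 1)),
    SBoundary X G (k + 1) (map (k + 1) c) =
      φ.map (k + 1) c - ψ.map (k + 1) c - map k ⟨SBoundary Z G k c, T.boundary_mem c.2⟩

/-- The chain homotopy `D` is `𝒰`-small. -/
def SingChainHtpy.Small {φ ψ : SingChainMap G T X} (D : SingChainHtpy φ ψ)
    (𝒰 : Set (Set X)) : Prop :=
  ∀ (k : ℕ) (σ : SSimplex Z k), σ ∈ T.mem k → ∃ U ∈ 𝒰,
    (∀ (m : ℕ) (τ : SSimplex Z m), IsFaceOf τ σ → ∀ hτ : τ ∈ T.mem m,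
      SCarrier (D.map m (T.gen G τ hτ)) ⊆ U) ∧
    (∀ v : SSimplex Z 0, IsFaceOf v σ → ∀ hv : v ∈ T.mem 0,
      SCarrier (φ.val 0 v hv) ∪ SCarrier (ψ.val 0 v hv) ⊆ U)

end MoreChainMaps

/-- The pushforward of a singular simplex along a continuous map. -/
def pushSimplex {X : Type u} {Y : Type w} [TopologicalSpace X] [TopologicalSpace Y]
    (f : C(X, Y)) {k : ℕ} (σ : SSimplex X k) : SSimplex Y k :=
  f.comp σ

/-- The chain morphism `f_♯` induced by a continuous map `f`. -/
def pushChain {X : Type u} {Y : Type w} [TopologicalSpace X] [TopologicalSpace Y]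
    (f : C(X, Y)) (G : Type v) [AddCommGroup G] (k : ℕ) :
    SChain X G k →+ SChain Y G k :=
  Finsupp.mapDomain.addMonoidHom (pushSimplex f)

section Simplicial

/-- An abstract simplicial complex on the vertex set `V`. -/
structure AbsComplex (V : Type w') where
  faces : Set (Finset V)
  nonempty_of_mem : ∀ s ∈ faces, s.Nonempty
  down_closed : ∀ s ∈ faces, ∀ t ⊆ s, t.Nonempty → t ∈ faces

/-- `K` has dimension at most `n`. -/
def AbsComplex.DimLE {V : Type w'} (K : AbsComplex V) (n : ℕ) : Prop :=
  ∀ s ∈ K.faces, s.card ≤ n + 1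

/-- Oriented simplicial `k`-chains on the vertex set `V` with coefficients in `G`
(with orientations induced by the linear order on `V`). -/
abbrev SimpChain (V : Type w') (G : Type v) [Zero G] (k : ℕ) :=
  {s : Finset V // s.card = k + 1} →₀ G

variable {V : Type w'} [LinearOrder V]

/-- The `i`-th face of a `(k+1)`-dimensional simplex. -/
def simpFace {k : ℕ} (s : {s : Finset V // s.card = k + 2}) (i : Fin (k + 2)) :
    {s : Finset V // s.card = k + 1} :=
  ⟨s.1.erase (s.1.orderIsoOfFin s.2 i), by
    rw [Finset.card_erase_of_mem (s.1.orderIsoOfFin s.2 i).2, s.2]; omega⟩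

/-- The boundary operator of the oriented chain complex `C(·;G)` on vertex set `V`. -/
def simpBoundary (V : Type w') [LinearOrder V] (G : Type v) [AddCommGroup G] (k : ℕ) :
    SimpChain V G (k + 1) →+ SimpChain V G k :=
  Finsupp.liftAddHom fun s =>
    ∑ i : Fin (k + 2), ((-1 : ℤ) ^ (i : ℕ)) • Finsupp.singleAddHom (simpFace s i)

/-- The augmentation of the oriented chain complex. -/
def simpAug (V : Type w') (G : Type v) [AddCommGroup G] : SimpChain V G 0 →+ G :=
  Finsupp.liftAddHom fun _ => AddMonoidHom.id G

/-- The `G`-module of `k`-chains of `C(K;G)`, as a submodule of the `k`-chains on `V`. -/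
def AbsComplex.sub (K : AbsComplex V) (G : Type v) [CommRing G] (k : ℕ) :
    Submodule G (SimpChain V G k) where
  carrier := {c | ∀ s ∈ c.support, s.1 ∈ K.faces}
  add_mem' := by
    classical
    intro a b ha hb s hs
    rcases Finset.mem_union.1 (Finsupp.support_add hs) with h | h
    exacts [ha s h, hb s h]
  zero_mem' := by simp
  smul_mem' := by
    intro g c hc s hs
    exact hc s (Finsupp.support_smul hs)

theorem AbsComplex.mem_sub {K : AbsComplex V} {G : Type v} [CommRing G] {k : ℕ}
    {c : SimpChain V G k} : c ∈ K.sub G k ↔ ∀ s ∈ c.support, s.1 ∈ K.faces := Iff.rfl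

theorem AbsComplex.sub_le {K L : AbsComplex V} (h : L.faces ⊆ K.faces)
    (G : Type v) [CommRing G] (k : ℕ) : L.sub G k ≤ K.sub G k :=
  fun _c hc => fun s hs => h (hc s hs)

theorem AbsComplex.single_mem (K : AbsComplex V) {G : Type v} [CommRing G] {k : ℕ}
    {s : {s : Finset V // s.card = k + 1}} (h : s.1 ∈ K.faces) (g : G) :
    Finsupp.single s g ∈ K.sub G k := by
  rw [AbsComplex.mem_sub]
  intro t ht
  have h1 : t ∈ ({s} : Finset {s : Finset V // s.card = k + 1}) :=
    Finsupp.support_single_subset ht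
  rw [Finset.mem_singleton] at h1
  subst h1; exact h

/-- The generator of `K.sub G k` given by a single simplex with coefficient `1`. -/
def AbsComplex.gen (K : AbsComplex V) (G : Type v) [CommRing G] {k : ℕ}
    (s : Finset V) (hcard : s.card = k + 1) (h : s ∈ K.faces) : K.sub G k :=
  ⟨Finsupp.single ⟨s, hcard⟩ 1, K.single_mem h 1⟩

theorem AbsComplex.boundary_mem (K : AbsComplex V) {G : Type v} [CommRing G] {k : ℕ}
    {c : SimpChain V G (k + 1)} (hc : c ∈ K.sub G (k + 1)) :
    simpBoundary V G k c ∈ K.sub G k := by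
  classical
  rw [AbsComplex.mem_sub] at hc ⊢
  intro t ht
  rw [simpBoundary, Finsupp.liftAddHom_apply] at ht
  have h1 := Finsupp.support_sum ht
  rw [Finset.mem_biUnion] at h1
  obtain ⟨s, hs, ht2⟩ := h1
  rw [AddMonoidHom.finset_sum_apply] at ht2
  have h2 := Finsupp.support_finset_sum (s := (Finset.univ : Finset (Fin (k + 2))))
    (f := fun i : Fin (k + 2) =>
      ((((-1 : ℤ) ^ (i : ℕ)) • Finsupp.singleAddHom (simpFace s i)) (c s))) ht2
  rw [Finset.mem_biUnion] at h2
  obtain ⟨i, -, hi⟩ := h2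
  simp only [AddMonoidHom.smul_apply] at hi
  have h5 := Finsupp.support_smul hi
  have h4 : t ∈ ({simpFace s i} : Finset {s : Finset V // s.card = k + 1}) :=
    Finsupp.support_single_subset h5
  rw [Finset.mem_singleton] at h4
  subst h4
  refine K.down_closed s.1 (hc s hs) _ (Finset.erase_subset _ _) ?_
  rw [← Finset.card_pos, (simpFace s i).2]
  exact Nat.succ_pos k

section SimpMaps

variable {G : Type v} [CommRing G] {V : Type w'} [LinearOrder V]
  {X : Type u} [TopologicalSpace X]

/-- A chain morphism from the oriented chain complex `C(K;G)` to `S(X;G)`. -/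
structure SimpToSing (G : Type v) [CommRing G] {V : Type w'} [LinearOrder V]
    (K : AbsComplex V) (X : Type u) [TopologicalSpace X] where
  map : ∀ k, K.sub G k →ₗ[G] SChain X G k
  comm : ∀ (k : ℕ) (c : K.sub G (k + 1)),
    map k ⟨simpBoundary V G k c, K.boundary_mem c.2⟩ = SBoundary X G k (map (k + 1) c)
  aug : ∀ c : K.sub G 0, SAug X G (map 0 c) = simpAug V G c

/-- The value of such a chain morphism on a single simplex of `K`. -/
def SimpToSing.val {K : AbsComplex V} (φ : SimpToSing G K X) (m : ℕ) (s : Finset V)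
    (hcard : s.card = m + 1) (h : s ∈ K.faces) : SChain X G m :=
  φ.map m (K.gen G s hcard h)

/-- Restriction of such a chain morphism to a subcomplex. -/
def SimpToSing.restrict {K : AbsComplex V} (φ : SimpToSing G K X) {L : AbsComplex V}
    (h : L.faces ⊆ K.faces) : SimpToSing G L X where
  map k := (φ.map k).comp (Submodule.inclusion (AbsComplex.sub_le h G k))
  comm k c := φ.comm k (Submodule.inclusion (AbsComplex.sub_le h G (k + 1)) c)
  aug c := φ.aug (Submodule.inclusion (AbsComplex.sub_le h G 0) c)

/-- `φbig` (defined on `K`) extends `φ` (defined on the subcomplex `L`). -/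
def SimpToSing.ExtendsMap {K L : AbsComplex V} (h : L.faces ⊆ K.faces)
    (φbig : SimpToSing G K X) (φ : SimpToSing G L X) : Prop :=
  ∀ (k : ℕ) (c : SimpChain V G k) (hc : c ∈ L.sub G k),
    φbig.map k ⟨c, AbsComplex.sub_le h G k hc⟩ = φ.map k ⟨c, hc⟩

/-- Two families of values on the simplexes of `K` are `𝒰`-close. -/
def SimpValsClose (K : AbsComplex V)
    (F₁ F₂ : ∀ (m : ℕ) (s : Finset V), s.card = m + 1 → s ∈ K.faces → SChain X G m)
    (𝒰 : Set (Set X)) : Prop :=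
  ∀ (k : ℕ) (s : Finset V) (_hs : s.card = k + 1), s ∈ K.faces → ∃ U ∈ 𝒰,
    ∀ (m : ℕ) (t : Finset V) (ht : t.card = m + 1), t ⊆ s → ∀ htK : t ∈ K.faces,
      SCarrier (F₁ m t ht htK) ∪ SCarrier (F₂ m t ht htK) ⊆ U

/-- A family of values on the simplexes of `K` is `𝒰`-small. -/
def SimpValsSmall (K : AbsComplex V)
    (F : ∀ (m : ℕ) (s : Finset V), s.card = m + 1 → s ∈ K.faces → SChain X G m)
    (𝒰 : Set (Set X)) : Prop :=
  ∀ (k : ℕ) (s : Finset V) (_hs : s.card = k + 1), s ∈ K.faces → ∃ U ∈ 𝒰,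
    ∀ (m : ℕ) (t : Finset V) (ht : t.card = m + 1), t ⊆ s → ∀ htK : t ∈ K.faces,
      SCarrier (F m t ht htK) ⊆ U

/-- A family of values is correct: every vertex is sent to a singular `0`-simplex. -/
def SimpValsCorrect (K : AbsComplex V)
    (F : ∀ (m : ℕ) (s : Finset V), s.card = m + 1 → s ∈ K.faces → SChain X G m) : Prop :=
  ∀ (s : Finset V) (hs : s.card = 0 + 1) (hK : s ∈ K.faces),
    ∃ τ : SSimplex X 0, F 0 s hs hK = Finsupp.single τ 1

/-- A chain morphism `φ : C(L;G) → S(X;G)` is a partial algebraic realization of `C(K;G)`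
in the open cover `𝒰` (where `L` is a subcomplex of `K`). -/
def IsPartialRealization {K L : AbsComplex V} (_hLK : L.faces ⊆ K.faces)
    (φ : SimpToSing G L X) (𝒰 : Set (Set X)) : Prop :=
  ∀ (k : ℕ) (s : Finset V) (_hs : s.card = k + 1), s ∈ K.faces → ∃ U ∈ 𝒰,
    ∀ (m : ℕ) (t : Finset V) (ht : t.card = m + 1), t ⊆ s → ∀ htL : t ∈ L.faces,
      SCarrier (φ.val m t ht htL) ⊆ U

/-- `L` contains all vertices of `K`. -/
def ContainsVertices {V : Type w'} (L K : AbsComplex V) : Prop :=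
  ∀ v : V, {v} ∈ K.faces → {v} ∈ L.faces

/-- A chain homotopy between two chain morphisms `C(K;G) → S(X;G)`. -/
structure SimpChainHtpy {K : AbsComplex V} (φ ψ : SimpToSing G K X) where
  map : ∀ k, K.sub G k →ₗ[G] SChain X G (k + 1)
  zero : ∀ c : K.sub G 0, SBoundary X G 0 (map 0 c) = φ.map 0 c - ψ.map 0 c
  succ : ∀ (k : ℕ) (c : K.sub G (k + 1)),
    SBoundary X G (k + 1) (map (k + 1) c) =
      φ.map (k + 1) c - ψ.map (k + 1) c - map k ⟨simpBoundary V G k c, K.boundary_mem c.2⟩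

/-- The chain homotopy is `𝒰`-small. -/
def SimpChainHtpy.Small {K : AbsComplex V} {φ ψ : SimpToSing G K X}
    (D : SimpChainHtpy φ ψ) (𝒰 : Set (Set X)) : Prop :=
  ∀ (k : ℕ) (s : Finset V) (_hs : s.card = k + 1), s ∈ K.faces → ∃ U ∈ 𝒰,
    (∀ (m : ℕ) (t : Finset V) (ht : t.card = m + 1), t ⊆ s → ∀ htK : t ∈ K.faces,
      SCarrier (D.map m (K.gen G t ht htK)) ⊆ U) ∧
    (∀ v : V, v ∈ s → ∀ hv : {v} ∈ K.faces,
      SCarrier (φ.val 0 {v} (Finset.card_singleton v) hv) ∪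
        SCarrier (ψ.val 0 {v} (Finset.card_singleton v) hv) ⊆ U)

/-- A chain morphism from a subcomplex `T` of `S(Y;G)` to the oriented chain complex
`C(K;G)`. -/
structure SingToSimp (G : Type v) [CommRing G] {Y : Type w} [TopologicalSpace Y]
    (T : SingSub Y) {V : Type w'} [LinearOrder V] (K : AbsComplex V) where
  map : ∀ k, T.sub G k →ₗ[G] SimpChain V G k
  mem : ∀ (k : ℕ) (c : T.sub G k), map k c ∈ K.sub G k
  comm : ∀ (k : ℕ) (c : T.sub G (k + 1)),
    map k ⟨SBoundary Y G k c, T.boundary_mem c.2⟩ = simpBoundary V G k (map (k + 1) c)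
  aug : ∀ c : T.sub G 0, simpAug V G (map 0 c) = SAug Y G c

end SimpMaps

open Topology

/-- `X` is an absolute neighborhood algebraic `G`-retract (an algebraic `ANR_G`):
every open cover `𝒰` has an open refinement `𝒱` such that every correct partial
algebraic realization of `C(K;G)` in `𝒱` extends to a full algebraic realization of
`C(K;G)` in `𝒰`. -/
def IsAlgANR (G : Type v) [CommRing G] (X : Type u) [MetricSpace X] : Prop :=
  ∀ 𝒰 : Set (Set X), IsOpenCover 𝒰 → ∃ 𝒱 : Set (Set X), IsOpenCover 𝒱 ∧ Refines 𝒱 𝒰 ∧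
    ∀ (V : Type w') (_ : LinearOrder V) (K L : AbsComplex V) (hLK : L.faces ⊆ K.faces),
      ContainsVertices L K → ∀ φ : SimpToSing G L X, SimpValsCorrect L φ.val →
        IsPartialRealization hLK φ 𝒱 →
        ∃ ψ : SimpToSing G K X, ψ.ExtendsMap hLK φ ∧ SimpValsSmall K ψ.val 𝒰

/-- `A` is a neighborhood algebraic `G`-retract of `M`: there are a neighborhood `U` of
`A`, an open cover `𝒰` of `U` and a chain morphism `μ : S(U,𝒰;G) → S(A;G)` which is the
identity on `S(A;G) ∩ S(U,𝒰;G)` and which is "continuous at `A`" in the sense of (ii). -/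
def IsNbhdAlgRetract (G : Type v) [CommRing G] {M : Type u} [TopologicalSpace M]
    (A : Set M) : Prop :=
  ∃ U : Set M, IsOpen U ∧ A ⊆ U ∧ ∃ 𝒰 : Set (Set M), IsOpenCoverOn 𝒰 U ∧
    ∃ μ : SingChainMap G (coverSub 𝒰) M,
      (∀ (k : ℕ) (c : SChain M G k) (hc : c ∈ (coverSub 𝒰).sub G k),
        SCarrier (μ.map k ⟨c, hc⟩) ⊆ A) ∧
      (∀ (k : ℕ) (c : SChain M G k) (hc : c ∈ (coverSub 𝒰).sub G k),
        c ∈ (setSub A).sub G k → μ.map k ⟨c, hc⟩ = c) ∧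
      (∀ x ∈ A, ∀ Vx ∈ nhdsWithin x A, ∃ Wx ∈ nhds x, Wx ⊆ U ∧
        ∀ (k : ℕ) (c : SChain M G k) (hc : c ∈ (coverSub 𝒰).sub G k),
          SCarrier c ⊆ Wx → SCarrier (μ.map k ⟨c, hc⟩) ⊆ Vx)

/-- `X` is a (metric) absolute neighborhood retract: whenever `X` is embedded as a closed
subset of a metric space `M`, some neighborhood of it retracts onto it. -/
def IsMetricANR (X : Type u) [MetricSpace X] : Prop :=
  ∀ (M : Type max u w) (_ : MetricSpace M) (e : X → M), IsClosedEmbedding e →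
    ∃ W : Set M, IsOpen W ∧ Set.range e ⊆ W ∧
      ∃ r : W → M, Continuous r ∧ (∀ w : W, r w ∈ Set.range e) ∧
        ∀ (x : X) (h : e x ∈ W), r ⟨e x, h⟩ = e x

/-- `X` is an approximate absolute neighborhood `G`-retract (an `AANR_G`). -/
def IsAANR (G : Type v) [CommRing G] (X : Type u) [MetricSpace X] : Prop :=
  ∀ (Y : Type max u w) (_ : MetricSpace Y) (e : X → Y), IsClosedEmbedding e →
    ∀ 𝒰 : Set (Set X), IsOpenCover 𝒰 →
      ∃ W : Set Y, IsOpen W ∧ Set.range e ⊆ W ∧ ∃ α : Set (Set Y), IsOpenCoverOn α W ∧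
        ∃ φ : SingChainMap G (coverSub α) Y,
          (∀ (k : ℕ) (c : SChain Y G k) (hc : c ∈ (coverSub α).sub G k),
            SCarrier (φ.map k ⟨c, hc⟩) ⊆ Set.range e) ∧
          ValsClose (interSub (setSub (Set.range e)) (coverSub α))
            (fun m σ h => φ.map m ((coverSub α).gen G σ h.2))
            (fun _m σ _ => Finsupp.single σ 1)
            ((fun (U : Set X) => e '' U) '' 𝒰)

/-- `Y` has the approximate `lc^n_G`-property. -/
def ApproxLC (G : Type v) [AddCommGroup G] (Y : Type u) [TopologicalSpace Y] (n : ℕ) : Prop :=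
  ∀ y : Y, ∀ U ∈ nhds y, ∃ V ∈ nhds y, ∃ W ∈ nhds y, V ⊆ W ∧
    ∀ k ≤ n, ∀ c : SChain Y G k, SCarrier c ⊆ V → IsCycle Y G c →
      ∃ c' : SChain Y G k, SCarrier c' ⊆ W ∧ IsCycle Y G c' ∧
        chainVertices c' = chainVertices c ∧
        ∃ b : SChain Y G (k + 1), SCarrier b ⊆ U ∧ SBoundary Y G k b = c'

theorem setSub_le_full {Z : Type w} [TopologicalSpace Z] (A : Set Z) :
    (setSub A).le (fullSub Z) := fun _ _ _ => trivial

theorem truncSetSub_le_truncFull {Z : Type w} [TopologicalSpace Z] (A : Set Z) (n : ℕ) :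
    (truncSub (setSub A) n).le (truncSub (fullSub Z) n) :=
  fun _k _σ h => ⟨trivial, h.2⟩

theorem interSub_le_left {Z : Type w} [TopologicalSpace Z] (T T' : SingSub Z) :
    (interSub T T').le T := fun _k _σ h => h.1

theorem interSub_le_right {Z : Type w} [TopologicalSpace Z] (T T' : SingSub Z) :
    (interSub T T').le T' := fun _k _σ h => h.2

/-- A chain morphism `φ`, defined on the subcomplex `L` of the singular complex `Kc` of
`P` (where `L` contains all `0`-simplexes of `Kc`), is a partial singular realization of
`Kc` in the open cover `𝒰`. -/
def IsPartialSingRealization {G : Type v} [CommRing G] {P : Type w} [TopologicalSpace P]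
    {X : Type u} [TopologicalSpace X] {Kc L : SingSub P} (_hL : L.le Kc)
    (φ : SingChainMap G L X) (𝒰 : Set (Set X)) : Prop :=
  ∀ (k : ℕ) (σ : SSimplex P k), σ ∈ Kc.mem k → ∃ U ∈ 𝒰,
    ∀ (m : ℕ) (τ : SSimplex P m), IsFaceOf τ σ → ∀ hτ : τ ∈ L.mem m,
      SCarrier (φ.val m τ hτ) ⊆ U


section Statement17Aux

variable {X : Type u} [TopologicalSpace X]

/-- Pushforward of chains along a coefficient homomorphism. -/
def mapCoef {G : Type v} {G' : Type w'} [AddCommGroup G] [AddCommGroup G']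
    (f : G →+ G') {k : ℕ} : SChain X G k →+ SChain X G' k :=
  Finsupp.mapRange.addMonoidHom f

variable {G : Type v} {G' : Type w'} {G'' : Type w} [AddCommGroup G] [AddCommGroup G']
  [AddCommGroup G'']

theorem mapCoef_apply (f : G →+ G') {k : ℕ} (c : SChain X G k) (σ : SSimplex X k) :
    mapCoef f c σ = f (c σ) := rfl

theorem mapCoef_single (f : G →+ G') {k : ℕ} (σ : SSimplex X k) (g : G) :
    mapCoef (X := X) f (Finsupp.single σ g) = Finsupp.single σ (f g) :=
  Finsupp.mapRange_single (hf := f.map_zero)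

theorem support_mapCoef (f : G →+ G') {k : ℕ} (c : SChain X G k) :
    (mapCoef f c).support ⊆ c.support := Finsupp.support_mapRange (hf := f.map_zero)

theorem mapCoef_mapCoef (f : G →+ G') (g : G' →+ G'') {k : ℕ} (c : SChain X G k) :
    mapCoef g (mapCoef f c) = mapCoef (g.comp f) c := by
  ext σ; simp [mapCoef_apply]

theorem mapCoef_injective {f : G →+ G'} (hf : Function.Injective f) {k : ℕ} :
    Function.Injective (mapCoef (X := X) f (k := k)) := by
  intro a b hab
  ext σ
  exact hf (by rw [← mapCoef_apply f a σ, ← mapCoef_apply f b σ, hab])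

theorem SCarrier_mono {k : ℕ} {c : SChain X G k} {d : SChain X G' k}
    (h : c.support ⊆ d.support) : SCarrier c ⊆ SCarrier d := by
  intro x hx
  simp only [SCarrier, Set.mem_iUnion, exists_prop] at hx ⊢
  obtain ⟨σ, hσ, hxσ⟩ := hx
  exact ⟨σ, h hσ, hxσ⟩

theorem SCarrier_zero {k : ℕ} : SCarrier (0 : SChain X G k) = ∅ := by
  simp [SCarrier]

theorem SCarrier_mapCoef (f : G →+ G') {k : ℕ} (c : SChain X G k) :
    SCarrier (mapCoef f c) ⊆ SCarrier c := SCarrier_mono (support_mapCoef f c)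

theorem SCarrier_add {k : ℕ} (c d : SChain X G k) :
    SCarrier (c + d) ⊆ SCarrier c ∪ SCarrier d := by
  classical
  intro x hx
  simp only [SCarrier, Set.mem_iUnion, Set.mem_union, exists_prop] at hx ⊢
  obtain ⟨σ, hσ, hxσ⟩ := hx
  rcases Finset.mem_union.1 (Finsupp.support_add hσ) with h | h
  exacts [Or.inl ⟨σ, h, hxσ⟩, Or.inr ⟨σ, h, hxσ⟩]

theorem SCarrier_neg {k : ℕ} (c : SChain X G k) : SCarrier (-c) = SCarrier c := by
  simp [SCarrier, Finsupp.support_neg]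

theorem SCarrier_sub {k : ℕ} (c d : SChain X G k) :
    SCarrier (c - d) ⊆ SCarrier c ∪ SCarrier d := by
  rw [sub_eq_add_neg]
  exact (SCarrier_add c (-d)).trans (by rw [SCarrier_neg])

theorem SCarrier_single {k : ℕ} (σ : SSimplex X k) (g : G) :
    SCarrier (Finsupp.single σ g) ⊆ Set.range σ := by
  intro x hx
  simp only [SCarrier, Set.mem_iUnion, exists_prop] at hx
  obtain ⟨τ, hτ, hxτ⟩ := hx
  have h1 : τ ∈ ({σ} : Finset (SSimplex X k)) := Finsupp.support_single_subset hτ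
  rw [Finset.mem_singleton] at h1
  subst h1; exact hxτ

theorem SCarrier_finset_sum {A : Type w'} {k : ℕ} (s : Finset A) (f : A → SChain X G k) :
    SCarrier (∑ a ∈ s, f a) ⊆ ⋃ a ∈ s, SCarrier (f a) := by
  classical
  intro x hx
  simp only [SCarrier, Set.mem_iUnion, exists_prop] at hx ⊢
  obtain ⟨σ, hσ, hxσ⟩ := hx
  have h1 := Finsupp.support_finset_sum hσ
  rw [Finset.mem_biUnion] at h1
  obtain ⟨a, ha, hσa⟩ := h1
  exact ⟨a, ha, σ, hσa, hxσ⟩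

theorem SBoundary_single {k : ℕ} (σ : SSimplex X (k + 1)) (g : G) :
    SBoundary X G k (Finsupp.single σ g) =
      ∑ i : Fin (k + 2), ((-1 : ℤ) ^ (i : ℕ)) • Finsupp.single (σ.face i) g := by
  rw [SBoundary, Finsupp.liftAddHom_apply_single, AddMonoidHom.finset_sum_apply]
  simp only [AddMonoidHom.smul_apply, Finsupp.singleAddHom_apply]

theorem SAug_single (σ : SSimplex X 0) (g : G) :
    SAug X G (Finsupp.single σ g) = g := by
  rw [SAug, Finsupp.liftAddHom_apply_single]; rfl

theorem addHom_ext_chain {M : Type w'} [AddCommMonoid M] {k : ℕ}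
    {H1 H2 : SChain X G k →+ M}
    (h : ∀ σ g, H1 (Finsupp.single σ g) = H2 (Finsupp.single σ g)) (c : SChain X G k) :
    H1 c = H2 c := DFunLike.congr_fun (Finsupp.addHom_ext h) c

theorem SBoundary_mapCoef (f : G →+ G') {k : ℕ} (c : SChain X G (k + 1)) :
    SBoundary X G' k (mapCoef f c) = mapCoef f (SBoundary X G k c) := by
  refine addHom_ext_chain (H1 := (SBoundary X G' k).comp (mapCoef f))
    (H2 := (mapCoef f).comp (SBoundary X G k)) (fun σ g => ?_) c
  simp only [AddMonoidHom.coe_comp, Function.comp_apply, mapCoef_single, SBoundary_single,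
    map_sum, map_zsmul]

theorem SAug_mapCoef (f : G →+ G') (c : SChain X G 0) :
    SAug X G' (mapCoef f c) = f (SAug X G c) := by
  refine addHom_ext_chain (H1 := (SAug X G').comp (mapCoef f))
    (H2 := f.comp (SAug X G)) (fun σ g => ?_) c
  simp only [AddMonoidHom.coe_comp, Function.comp_apply, mapCoef_single, SAug_single]

open CategoryTheory in
theorem toTopMap_comp' {x y z : SimplexCategory} (f : x ⟶ y) (g : y ⟶ z) (p : x.toTopObj) :
    SimplexCategory.toTopMap (f ≫ g) p =
      SimplexCategory.toTopMap g (SimplexCategory.toTopMap f p) := by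
  apply Subtype.ext; funext i
  simp only [SimplexCategory.toTopMap, Finset.sum_filter]
  simp only [Finset.ite_sum_zero]
  rw [Finset.sum_comm]
  refine Finset.sum_congr rfl fun j _ => ?_
  rw [Finset.sum_eq_single (f.toOrderHom j)]
  · simp [SimplexCategory.comp_toOrderHom]
  · intro l _ hl; simp [Ne.symm hl]
  · simp

theorem SSimplex.face_face {k : ℕ} (σ : SSimplex X (k + 2)) {i j : Fin (k + 2)} (h : i ≤ j) :
    (σ.face j.succ).face i = (σ.face i.castSucc).face j := by
  ext x
  show σ (SimplexCategory.toTopMap (SimplexCategory.δ j.succ)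
        (SimplexCategory.toTopMap (SimplexCategory.δ i) x)) =
      σ (SimplexCategory.toTopMap (SimplexCategory.δ i.castSucc)
        (SimplexCategory.toTopMap (SimplexCategory.δ j) x))
  rw [← toTopMap_comp', ← toTopMap_comp', SimplexCategory.δ_comp_δ h]

theorem face_swap {k : ℕ} (σ : SSimplex X (k + 2)) (a b : ℕ) (ha : a < k + 3)
    (hb : b < k + 2) (hba : b < a) :
    (σ.face ⟨a, ha⟩).face ⟨b, hb⟩ =
      (σ.face ⟨b, by omega⟩).face ⟨a - 1, by omega⟩ := by
  have h1 : (⟨a, ha⟩ : Fin (k + 3)) = (⟨a - 1, by omega⟩ : Fin (k + 2)).succ := by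
    ext; simp [Fin.succ]; omega
  have h2 : (⟨b, by omega⟩ : Fin (k + 3)) = (⟨b, hb⟩ : Fin (k + 2)).castSucc := by
    ext; simp
  rw [h1, h2]
  exact SSimplex.face_face σ (by simp [Fin.le_def]; omega)

theorem SBoundary_SBoundary {k : ℕ} (c : SChain X G (k + 2)) :
    SBoundary X G k (SBoundary X G (k + 1) c) = 0 := by
  classical
  refine addHom_ext_chain (H1 := (SBoundary X G k).comp (SBoundary X G (k + 1)))
    (H2 := 0) (fun σ g => ?_) c
  simp only [AddMonoidHom.coe_comp, Function.comp_apply, AddMonoidHom.zero_apply]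
  rw [SBoundary_single, map_sum]
  simp only [map_zsmul, SBoundary_single, Finset.smul_sum, smul_smul, ← pow_add]
  rw [← Finset.sum_product']
  have cancel : ∀ (a b : ℕ) (ha : a < k + 3) (hb : b < k + 2) (hb3 : b < k + 3)
      (ha1 : a - 1 < k + 2) (hba : b < a),
      ((-1 : ℤ) ^ (a + b)) • Finsupp.single ((σ.face ⟨a, ha⟩).face ⟨b, hb⟩) g
        + ((-1 : ℤ) ^ (b + (a - 1))) •
            Finsupp.single ((σ.face ⟨b, hb3⟩).face ⟨a - 1, ha1⟩) g = 0 := by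
    intro a b ha hb hb3 ha1 hba
    rw [face_swap σ a b ha hb hba]
    have he : a + b = (b + (a - 1)) + 1 := by omega
    rw [he, pow_succ, mul_neg_one, neg_smul]
    exact neg_add_cancel _
  refine Finset.sum_involution
    (fun p _ => if h : (p.2 : ℕ) < (p.1 : ℕ)
      then (⟨(p.2 : ℕ), by have := p.2.isLt; omega⟩, ⟨(p.1 : ℕ) - 1, by have := p.1.isLt; omega⟩)
      else (⟨(p.2 : ℕ) + 1, by have := p.2.isLt; omega⟩, ⟨(p.1 : ℕ), by
        have := p.1.isLt; have := p.2.isLt; omega⟩))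
    ?_ ?_ (fun _ _ => Finset.mem_univ _) ?_
  · intro p _
    by_cases h : (p.2 : ℕ) < (p.1 : ℕ)
    · rw [dif_pos h]
      have := cancel (p.1 : ℕ) (p.2 : ℕ) p.1.isLt p.2.isLt
        (by have := p.2.isLt; omega) (by have := p.1.isLt; omega) h
      simpa using this
    · rw [dif_neg h]
      have := cancel ((p.2 : ℕ) + 1) (p.1 : ℕ) (by have := p.2.isLt; omega)
        (by have := p.1.isLt; have := p.2.isLt; omega)
        (by have := p.1.isLt; omega) (by have := p.2.isLt; omega) (by omega)
      rw [add_comm] at this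
      simpa using this
  · intro p _ _
    by_cases h : (p.2 : ℕ) < (p.1 : ℕ)
    · rw [dif_pos h]
      intro heq
      have h1 := congrArg (fun q : Fin (k + 3) × Fin (k + 2) => (q.1 : ℕ)) heq
      have h2 := congrArg (fun q : Fin (k + 3) × Fin (k + 2) => (q.2 : ℕ)) heq
      simp at h1 h2
      omega
    · rw [dif_neg h]
      intro heq
      have h1 := congrArg (fun q : Fin (k + 3) × Fin (k + 2) => (q.1 : ℕ)) heq
      have h2 := congrArg (fun q : Fin (k + 3) × Fin (k + 2) => (q.2 : ℕ)) heq
      simp at h1 h2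
      omega
  · intro p _
    by_cases h : (p.2 : ℕ) < (p.1 : ℕ)
    · rw [dif_pos h, dif_neg (by show ¬((p.1 : ℕ) - 1 < (p.2 : ℕ)); omega)]
      refine Prod.ext ?_ ?_ <;> simp [Fin.ext_iff] <;> omega
    · rw [dif_neg h, dif_pos (by show (p.1 : ℕ) < (p.2 : ℕ) + 1; omega)]
      refine Prod.ext ?_ ?_ <;> simp [Fin.ext_iff]

theorem SAug_SBoundary (c : SChain X G 1) : SAug X G (SBoundary X G 0 c) = 0 := by
  refine addHom_ext_chain (H1 := (SAug X G).comp (SBoundary X G 0)) (H2 := 0)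
    (fun σ g => ?_) c
  simp only [AddMonoidHom.coe_comp, Function.comp_apply, AddMonoidHom.zero_apply]
  rw [SBoundary_single, map_sum]
  simp [SAug_single, Fin.sum_univ_two]

theorem IsCycle.mapCoefCycle {k : ℕ} {c : SChain X G k} (h : IsCycle X G c) (f : G →+ G') :
    IsCycle X G' (mapCoef f c) := by
  cases k with
  | zero =>
    show SAug X G' (mapCoef f c) = 0
    rw [SAug_mapCoef, show SAug X G c = 0 from h, map_zero]
  | succ m =>
    show SBoundary X G' m (mapCoef f c) = 0
    rw [SBoundary_mapCoef, show SBoundary X G m c = 0 from h, map_zero]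

theorem isCycle_of_mapCoef {k : ℕ} {f : G →+ G'} (hf : Function.Injective f)
    {c : SChain X G k} (h : IsCycle X G' (mapCoef f c)) : IsCycle X G c := by
  cases k with
  | zero =>
    have h' : SAug X G' (mapCoef f c) = 0 := h
    rw [SAug_mapCoef] at h'
    show SAug X G c = 0
    exact hf (by rw [h', map_zero])
  | succ m =>
    have h' : SBoundary X G' m (mapCoef f c) = 0 := h
    rw [SBoundary_mapCoef] at h'
    show SBoundary X G m c = 0
    exact mapCoef_injective hf (by rw [h', map_zero])

theorem isCycle_boundary {k : ℕ} (c : SChain X G (k + 1)) :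
    IsCycle X G (SBoundary X G k c) := by
  cases k with
  | zero => exact SAug_SBoundary c
  | succ m => exact SBoundary_SBoundary c

theorem SCarrier_SBoundary {k : ℕ} (c : SChain X G (k + 1)) :
    SCarrier (SBoundary X G k c) ⊆ SCarrier c := by
  classical
  intro x hx
  simp only [SCarrier, Set.mem_iUnion, exists_prop] at hx ⊢
  obtain ⟨τ, hτ, hxτ⟩ := hx
  rw [SBoundary, Finsupp.liftAddHom_apply] at hτ
  have h1 := Finsupp.support_sum hτ
  rw [Finset.mem_biUnion] at h1
  obtain ⟨σ, hσ, hτ2⟩ := h1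
  rw [AddMonoidHom.finset_sum_apply] at hτ2
  have h2 := Finsupp.support_finset_sum (s := (Finset.univ : Finset (Fin (k + 2))))
    (f := fun i : Fin (k + 2) =>
      ((((-1 : ℤ) ^ (i : ℕ)) • Finsupp.singleAddHom (σ.face i)) (c σ))) hτ2
  rw [Finset.mem_biUnion] at h2
  obtain ⟨i, -, hi⟩ := h2
  simp only [AddMonoidHom.smul_apply] at hi
  have h5 := Finsupp.support_smul hi
  have h4 : τ ∈ ({σ.face i} : Finset (SSimplex X k)) := Finsupp.support_single_subset h5
  rw [Finset.mem_singleton] at h4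
  subst h4
  exact ⟨σ, hσ, (isFaceOf_face σ i).range_subset hxτ⟩

theorem homTrivialPair_pi {V U : Set X} {n : ℕ} (h : HomTrivialPair ℤ V U n)
    (ι : Type w') [Fintype ι] : HomTrivialPair (ι → ℤ) V U n := by
  classical
  intro k hk c hcar hcyc
  let E : ι → ((ι → ℤ) →+ ℤ) := fun i => Pi.evalAddMonoidHom (fun _ => ℤ) i
  let S : ι → (ℤ →+ (ι → ℤ)) := fun i => AddMonoidHom.single (fun _ => ℤ) i
  have hdecomp : ∀ {m : ℕ} (d : SChain X (ι → ℤ) m),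
      d = ∑ i : ι, mapCoef ((S i).comp (E i)) d := by
    intro m d
    have h2 : (AddMonoidHom.id _) d =
        (∑ i : ι, (mapCoef ((S i).comp (E i)) : SChain X (ι → ℤ) m →+ _)) d := by
      refine addHom_ext_chain (fun σ v => ?_) d
      rw [AddMonoidHom.id_apply, AddMonoidHom.finset_sum_apply]
      simp only [mapCoef_single, AddMonoidHom.coe_comp, Function.comp_apply]
      have h3 : ∀ i, (S i) ((E i) v) = Pi.single i (v i) := fun i => rfl
      simp only [h3]
      have h4 : (∑ x : ι, Finsupp.single σ (Pi.single x (v x)) : SChain X (ι → ℤ) m)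
          = Finsupp.single σ (∑ x : ι, Pi.single x (v x)) :=
        (map_sum (Finsupp.singleAddHom σ) (fun x => Pi.single x (v x)) Finset.univ).symm
      rw [h4, Finset.univ_sum_single]
    simpa using h2
  have hcyc_i : ∀ i, IsCycle X ℤ (mapCoef (E i) c) := fun i => hcyc.mapCoefCycle (E i)
  have hcar_i : ∀ i, SCarrier (mapCoef (E i) c) ⊆ V :=
    fun i => (SCarrier_mapCoef _ _).trans hcar
  choose b hbU hbd using fun i => h k hk (mapCoef (E i) c) (hcar_i i) (hcyc_i i)
  refine ⟨∑ i : ι, mapCoef (S i) (b i), ?_, ?_⟩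
  · refine (SCarrier_finset_sum _ _).trans ?_
    exact Set.iUnion₂_subset fun i _ => (SCarrier_mapCoef _ _).trans (hbU i)
  · rw [map_sum]
    have : ∀ i : ι, SBoundary X (ι → ℤ) k (mapCoef (S i) (b i)) =
        mapCoef ((S i).comp (E i)) c := by
      intro i
      rw [SBoundary_mapCoef, hbd i, mapCoef_mapCoef]
    rw [Finset.sum_congr rfl (fun i _ => this i)]
    exact (hdecomp c).symm

theorem homTrivialPair_free {V U : Set X} {n : ℕ} (h : HomTrivialPair ℤ V U n)
    (F : Type w') [AddCommGroup F] [Module ℤ F] [Module.Free ℤ F] [Module.Finite ℤ F] :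
    HomTrivialPair F V U n := by
  classical
  intro k hk c hcar hcyc
  let e : F ≃ₗ[ℤ] (Module.Free.ChooseBasisIndex ℤ F → ℤ) :=
    (Module.Free.chooseBasis ℤ F).equivFun
  obtain ⟨b, hbU, hbd⟩ := homTrivialPair_pi h (Module.Free.ChooseBasisIndex ℤ F) k hk
    (mapCoef e.toLinearMap.toAddMonoidHom c)
    ((SCarrier_mapCoef _ _).trans hcar) (hcyc.mapCoefCycle _)
  refine ⟨mapCoef e.symm.toLinearMap.toAddMonoidHom b,
    (SCarrier_mapCoef _ _).trans hbU, ?_⟩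
  rw [SBoundary_mapCoef, hbd, mapCoef_mapCoef]
  ext σ
  rw [mapCoef_apply]
  exact e.symm_apply_apply _

/-- Lift a `G`-chain to a chain with coefficients in the free abelian group on its
support. -/
theorem exists_lift_chain {k : ℕ} (c : SChain X G k) :
    ∃ π : (({σ : SSimplex X k // σ ∈ c.support} → ℤ) →+ G),
      ∃ ctil : SChain X ({σ : SSimplex X k // σ ∈ c.support} → ℤ) k,
        mapCoef π ctil = c ∧ ctil.support ⊆ c.support := by
  classical
  set ι := {σ : SSimplex X k // σ ∈ c.support}
  refine ⟨∑ i : ι, (zmultiplesHom G (c i.1)).comp (Pi.evalAddMonoidHom (fun _ => ℤ) i),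
    Finsupp.onFinset c.support
      (fun σ => if hσ : σ ∈ c.support then Pi.single (⟨σ, hσ⟩ : ι) (1 : ℤ) else 0)
      (fun σ hσ => by by_contra hn; exact hσ (by simp [hn])), ?_, ?_⟩
  · set π : (ι → ℤ) →+ G :=
      ∑ i : ι, (zmultiplesHom G (c i.1)).comp (Pi.evalAddMonoidHom (fun _ => ℤ) i) with hπdef
    have hπ : ∀ i₀ : ι, π (Pi.single i₀ 1) = c i₀.1 := by
      intro i₀
      rw [hπdef, AddMonoidHom.finset_sum_apply]
      rw [Finset.sum_eq_single i₀]
      · simp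
      · intro i _ hne
        simp [Pi.single_eq_of_ne hne]
      · intro hmem
        exact absurd (Finset.mem_univ i₀) hmem
    ext σ
    rw [mapCoef_apply, Finsupp.onFinset_apply]
    by_cases hσ : σ ∈ c.support
    · rw [dif_pos hσ, hπ ⟨σ, hσ⟩]
    · rw [dif_neg hσ, map_zero]
      exact (Finsupp.notMem_support_iff.1 hσ).symm
  · exact Finsupp.support_onFinset_subset

end Statement17Aux

/-- If a closed subset `A` of a space `X` is homologically `UV^n(ℤ)`,
then `A` is homologically `UV^n(G)` for every coefficient group `G`. -/
theorem statement_17 {X : Type u} [TopologicalSpace X] (n : ℕ) (A : Set X)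
    (hA : IsClosed A) (h : IsUVSet ℤ n A) (G : Type v) [AddCommGroup G] :
    IsUVSet G n A := by
  classical
  intro U hU
  obtain ⟨V₁, hV₁n, hV₁U, hp1⟩ := h U hU
  obtain ⟨V₂, hV₂n, hV₂V₁, hp2⟩ := h V₁ hV₁n
  refine ⟨V₂, hV₂n, hV₂V₁.trans hV₁U, ?_⟩
  intro k hk c hcar hcyc
  by_cases hc : c = 0
  · refine ⟨0, ?_, ?_⟩
    · rw [SCarrier_zero]; exact Set.empty_subset U
    · rw [map_zero, hc]
  obtain ⟨π, ctil, hmap, hsupp⟩ := exists_lift_chain c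
  have hctil_car : SCarrier ctil ⊆ SCarrier c := SCarrier_mono hsupp
  cases k with
  | zero =>
    have hcy : SAug X G c = 0 := hcyc
    obtain ⟨σ₀, hσ₀⟩ := Finsupp.support_nonempty_iff.mpr hc
    set g₀ := SAug X ({σ : SSimplex X 0 // σ ∈ c.support} → ℤ) ctil with hg₀
    have hπg₀ : π g₀ = 0 := by rw [hg₀, ← SAug_mapCoef, hmap, hcy]
    have hc'cyc : IsCycle X ({σ : SSimplex X 0 // σ ∈ c.support} → ℤ)
        (ctil - Finsupp.single σ₀ g₀) := by
      show SAug X ({σ : SSimplex X 0 // σ ∈ c.support} → ℤ) _ = 0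
      rw [map_sub, SAug_single, hg₀, sub_self]
    have hc'car : SCarrier (ctil - Finsupp.single σ₀ g₀) ⊆ V₁ := by
      refine (SCarrier_sub _ _).trans (Set.union_subset
        (hctil_car.trans (hcar.trans hV₂V₁)) ((SCarrier_single _ _).trans ?_))
      refine Set.Subset.trans ?_ (hcar.trans hV₂V₁)
      intro x hx
      simp only [SCarrier, Set.mem_iUnion, exists_prop]
      exact ⟨σ₀, hσ₀, hx⟩
    obtain ⟨b', hb'U, hb'd⟩ := homTrivialPair_free hp1
      ({σ : SSimplex X 0 // σ ∈ c.support} → ℤ) 0 (Nat.zero_le n) _ hc'car hc'cyc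
    refine ⟨mapCoef π b', (SCarrier_mapCoef _ _).trans hb'U, ?_⟩
    rw [SBoundary_mapCoef, hb'd, map_sub, hmap, mapCoef_single, hπg₀,
      Finsupp.single_zero, sub_zero]
  | succ m =>
    have hcy : SBoundary X G m c = 0 := hcyc
    set d := SBoundary X ({σ : SSimplex X (m + 1) // σ ∈ c.support} → ℤ) m ctil with hd
    have hπd : mapCoef π d = 0 := by rw [hd, ← SBoundary_mapCoef, hmap, hcy]
    set K : Submodule ℤ ({σ : SSimplex X (m + 1) // σ ∈ c.support} → ℤ) :=
      LinearMap.ker π.toIntLinearMap with hK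
    have hdK : ∀ τ, d τ ∈ K := by
      intro τ
      have h0 : π (d τ) = 0 := by
        have h1 := DFunLike.congr_fun hπd τ
        rw [mapCoef_apply] at h1
        simpa using h1
      rw [hK, LinearMap.mem_ker]; exact h0
    set d' : SChain X ↥K m := Finsupp.onFinset d.support (fun τ => (⟨d τ, hdK τ⟩ : ↥K))
      (fun τ hτ => Finsupp.mem_support_iff.2 (fun h0 => hτ (Subtype.ext h0))) with hd'
    have hd'map : mapCoef (K.subtype.toAddMonoidHom) d' = d := by
      ext τ
      rw [mapCoef_apply, hd', Finsupp.onFinset_apply]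
      rfl
    have hd'cyc : IsCycle X ↥K d' := by
      refine isCycle_of_mapCoef (f := K.subtype.toAddMonoidHom) Subtype.val_injective ?_
      rw [hd'map, hd]
      exact isCycle_boundary ctil
    have hd'car : SCarrier d' ⊆ V₂ := by
      refine Set.Subset.trans ?_ (((SCarrier_SBoundary ctil).trans hctil_car).trans hcar)
      rw [← hd]
      exact SCarrier_mono (hd' ▸ Finsupp.support_onFinset_subset)
    haveI hKfin : Module.Finite ℤ ↥K := Module.Finite.iff_fg.2 (IsNoetherian.noetherian K)
    obtain ⟨e', he'U, he'd⟩ := homTrivialPair_free hp2 ↥K m (by omega) d' hd'car hd'cyc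
    have hc2cyc : IsCycle X ({σ : SSimplex X (m + 1) // σ ∈ c.support} → ℤ)
        (ctil - mapCoef K.subtype.toAddMonoidHom e') := by
      show SBoundary X ({σ : SSimplex X (m + 1) // σ ∈ c.support} → ℤ) m _ = 0
      rw [map_sub, SBoundary_mapCoef, he'd, hd'map, ← hd, sub_self]
    have hc2car : SCarrier (ctil - mapCoef K.subtype.toAddMonoidHom e') ⊆ V₁ :=
      (SCarrier_sub _ _).trans (Set.union_subset (hctil_car.trans (hcar.trans hV₂V₁))
        ((SCarrier_mapCoef _ _).trans he'U))
    obtain ⟨b', hb'U, hb'd⟩ := homTrivialPair_free hp1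
      ({σ : SSimplex X (m + 1) // σ ∈ c.support} → ℤ) (m + 1) hk _ hc2car hc2cyc
    refine ⟨mapCoef π b', (SCarrier_mapCoef _ _).trans hb'U, ?_⟩
    rw [SBoundary_mapCoef, hb'd, map_sub, hmap, mapCoef_mapCoef]
    have hz : mapCoef (π.comp K.subtype.toAddMonoidHom) e' = 0 := by
      ext τ
      simp only [mapCoef_apply, AddMonoidHom.coe_comp, Function.comp_apply,
        Finsupp.coe_zero, Pi.zero_apply]
      exact (e' τ).2
    rw [hz, sub_zero]
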